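/- Let α ∈ (0,1). There exists a constant C > 0 (depending only on α) such that for all x ∈ ℝ², the Kraichnan covariance satisfies |Q(0) − Q(x)| ≤ C (|x|^{2α} ∧ 1), where |·| denotes a matrix norm and a ∧ b = min{a,b}. -/

import Mathlib

open MeasureTheory Real

local notation "E2" => EuclideanSpace ℝ (Fin 2)

section OneD
open Set

lemma oneD_pointwise {α t y : ℝ} (hα : α ∈ Set.Ioo (0:ℝ) 1) (ht : 0 < t) (hy : 0 < y) :
    y * ((1 + y ^ 2) ^ (-(1 + α)) * min (t ^ 2 * y ^ 2) 1)
      ≤ min (t ^ 2 * y ^ (1 - 2*α)) (y ^ (-1 - 2*α)) := by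
  obtain ⟨hα0, hα1⟩ := hα
  have hy2 : (0:ℝ) < y ^ 2 := by positivity
  have hb : (1 + y ^ 2) ^ (-(1 + α)) ≤ (y ^ 2) ^ (-(1 + α)) :=
    Real.rpow_le_rpow_of_nonpos hy2 (by linarith) (by linarith)
  have hy2r : (y:ℝ) ^ (2:ℕ) = y ^ ((2:ℕ):ℝ) := (Real.rpow_natCast y 2).symm
  have he : (y ^ 2) ^ (-(1 + α)) = y ^ (-2 - 2*α) := by
    rw [hy2r, ← Real.rpow_mul hy.le]
    norm_num
    ring_nf
  have hmin : 0 ≤ min (t ^ 2 * y ^ 2) 1 := le_min (by positivity) zero_le_one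
  calc y * ((1 + y ^ 2) ^ (-(1 + α)) * min (t ^ 2 * y ^ 2) 1)
      ≤ y * (y ^ (-2 - 2*α) * min (t ^ 2 * y ^ 2) 1) := by
        apply mul_le_mul_of_nonneg_left _ hy.le
        apply mul_le_mul_of_nonneg_right _ hmin
        rw [← he]; exact hb
    _ = (y * y ^ (-2 - 2*α)) * min (t ^ 2 * y ^ 2) 1 := by ring
    _ = y ^ (-1 - 2*α) * min (t ^ 2 * y ^ 2) 1 := by
        rw [show y * y ^ (-2 - 2*α) = y ^ (1:ℝ) * y ^ (-2 - 2*α) by rw [Real.rpow_one],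
          ← Real.rpow_add hy]
        norm_num
        left; congr 1; ring
    _ = min (y ^ (-1 - 2*α) * (t ^ 2 * y ^ 2)) (y ^ (-1 - 2*α) * 1) := by
        rw [mul_min_of_nonneg _ _ (by positivity : (0:ℝ) ≤ y ^ (-1 - 2*α))]
    _ = min (t ^ 2 * y ^ (1 - 2*α)) (y ^ (-1 - 2*α)) := by
        rw [mul_one]
        congr 1
        rw [hy2r, show y ^ (-1 - 2*α) * (t ^ 2 * y ^ ((2:ℕ):ℝ)) = t ^ 2 * (y ^ (-1 - 2*α) * y ^ ((2:ℕ):ℝ)) by ring,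
          ← Real.rpow_add hy]
        norm_num
        left; congr 1; ring

lemma oneD_integrable_h {α t : ℝ} (hα : α ∈ Set.Ioo (0:ℝ) 1) (ht : 0 < t) (ht1 : t ≤ 1) :
    IntegrableOn (fun y : ℝ => min (t ^ 2 * y ^ (1 - 2*α)) (y ^ (-1 - 2*α))) (Set.Ioi 0) := by
  obtain ⟨hα0, hα1⟩ := hα
  have hR : (0:ℝ) < t⁻¹ := by positivity
  have hmeas : Measurable (fun y : ℝ => min (t ^ 2 * y ^ (1 - 2*α)) (y ^ (-1 - 2*α))) :=
    ((measurable_id.pow_const _).const_mul _).min (measurable_id.pow_const _)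
  have h1 : IntegrableOn (fun y : ℝ => min (t ^ 2 * y ^ (1 - 2*α)) (y ^ (-1 - 2*α)))
      (Set.Ioc 0 t⁻¹) := by
    have hmaj : IntegrableOn (fun y : ℝ => t ^ 2 * y ^ (1 - 2*α)) (Set.Ioc 0 t⁻¹) := by
      have := (intervalIntegral.intervalIntegrable_rpow' (a := 0) (b := t⁻¹)
        (r := 1 - 2*α) (by linarith)).const_mul (t ^ 2)
      rwa [intervalIntegrable_iff_integrableOn_Ioc_of_le hR.le] at this
    refine hmaj.mono' hmeas.aestronglyMeasurable.restrict ?_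
    filter_upwards [ae_restrict_mem measurableSet_Ioc] with y hy
    have hy0 : 0 < y := hy.1
    rw [Real.norm_eq_abs, abs_of_nonneg (le_min (by positivity) (by positivity))]
    exact min_le_left _ _
  have h2 : IntegrableOn (fun y : ℝ => min (t ^ 2 * y ^ (1 - 2*α)) (y ^ (-1 - 2*α)))
      (Set.Ioi t⁻¹) := by
    have hmaj : IntegrableOn (fun y : ℝ => y ^ (-1 - 2*α)) (Set.Ioi t⁻¹) :=
      integrableOn_Ioi_rpow_of_lt (by linarith) hR
    refine hmaj.mono' hmeas.aestronglyMeasurable.restrict ?_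
    filter_upwards [ae_restrict_mem measurableSet_Ioi] with y hy
    have hy0 : (0:ℝ) < y := lt_trans hR hy
    rw [Real.norm_eq_abs, abs_of_nonneg (le_min (by positivity) (by positivity))]
    exact min_le_right _ _
  have := h1.union h2
  rwa [Set.Ioc_union_Ioi_eq_Ioi hR.le] at this

lemma oneD_bound {α t : ℝ} (hα : α ∈ Set.Ioo (0:ℝ) 1) (ht : 0 < t) (ht1 : t ≤ 1) :
    ∫ y in Set.Ioi (0:ℝ), y * ((1 + y ^ 2) ^ (-(1 + α)) * min (t ^ 2 * y ^ 2) 1)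
      ≤ (1/(2 - 2*α) + 1/(2*α)) * t ^ (2*α) := by
  obtain ⟨hα0, hα1⟩ := hα
  have hR : (0:ℝ) < t⁻¹ := by positivity
  set h : ℝ → ℝ := fun y => min (t ^ 2 * y ^ (1 - 2*α)) (y ^ (-1 - 2*α)) with hh
  have hint : IntegrableOn h (Set.Ioi 0) := oneD_integrable_h ⟨hα0, hα1⟩ ht ht1
  -- step 1: compare with h
  have step1 : ∫ y in Set.Ioi (0:ℝ), y * ((1 + y ^ 2) ^ (-(1 + α)) * min (t ^ 2 * y ^ 2) 1)
      ≤ ∫ y in Set.Ioi (0:ℝ), h y := by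
    refine integral_mono_of_nonneg ?_ hint ?_
    · filter_upwards [ae_restrict_mem measurableSet_Ioi] with y hy
      have : (0:ℝ) < y := hy
      have : (0:ℝ) ≤ min (t ^ 2 * y ^ 2) 1 := le_min (by positivity) zero_le_one
      positivity
    · filter_upwards [ae_restrict_mem measurableSet_Ioi] with y hy
      exact oneD_pointwise ⟨hα0, hα1⟩ ht hy
  -- step 2: split
  have hdisj : Disjoint (Set.Ioc (0:ℝ) t⁻¹) (Set.Ioi t⁻¹) := Set.Ioc_disjoint_Ioi le_rfl
  have hunion : Set.Ioc (0:ℝ) t⁻¹ ∪ Set.Ioi t⁻¹ = Set.Ioi 0 := Set.Ioc_union_Ioi_eq_Ioi hR.le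
  have h1 : IntegrableOn h (Set.Ioc 0 t⁻¹) := hint.mono_set (by rw [← hunion]; exact Set.subset_union_left)
  have h2 : IntegrableOn h (Set.Ioi t⁻¹) := hint.mono_set (by rw [← hunion]; exact Set.subset_union_right)
  have step2 : ∫ y in Set.Ioi (0:ℝ), h y
      = (∫ y in Set.Ioc (0:ℝ) t⁻¹, h y) + ∫ y in Set.Ioi t⁻¹, h y := by
    rw [← hunion, setIntegral_union hdisj measurableSet_Ioi h1 h2]
  -- step 3: bound each piece
  have piece1 : (∫ y in Set.Ioc (0:ℝ) t⁻¹, h y) ≤ t ^ 2 * ((t⁻¹) ^ (2 - 2*α) / (2 - 2*α)) := by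
    have hmaj : IntegrableOn (fun y : ℝ => t ^ 2 * y ^ (1 - 2*α)) (Set.Ioc 0 t⁻¹) := by
      have := (intervalIntegral.intervalIntegrable_rpow' (a := 0) (b := t⁻¹)
        (r := 1 - 2*α) (by linarith)).const_mul (t ^ 2)
      rwa [intervalIntegrable_iff_integrableOn_Ioc_of_le hR.le] at this
    have hle : (∫ y in Set.Ioc (0:ℝ) t⁻¹, h y) ≤ ∫ y in Set.Ioc (0:ℝ) t⁻¹, t ^ 2 * y ^ (1 - 2*α) :=
      setIntegral_mono_on h1 hmaj measurableSet_Ioc (fun y hy => min_le_left _ _)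
    refine hle.trans ?_
    rw [MeasureTheory.integral_const_mul]
    apply mul_le_mul_of_nonneg_left _ (by positivity)
    rw [← intervalIntegral.integral_of_le hR.le,
      integral_rpow (Or.inl (by linarith : (-1:ℝ) < 1 - 2*α))]
    rw [Real.zero_rpow (by linarith : (1 - 2*α + 1) ≠ 0)]
    have : (1 - 2*α + 1) = 2 - 2*α := by ring
    rw [this]
    simp
  have piece2 : (∫ y in Set.Ioi t⁻¹, h y) ≤ (t⁻¹) ^ (-2*α) / (2*α) := by
    have hmaj : IntegrableOn (fun y : ℝ => y ^ (-1 - 2*α)) (Set.Ioi t⁻¹) :=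
      integrableOn_Ioi_rpow_of_lt (by linarith) hR
    have hle : (∫ y in Set.Ioi t⁻¹, h y) ≤ ∫ y in Set.Ioi t⁻¹, y ^ (-1 - 2*α) :=
      setIntegral_mono_on h2 hmaj measurableSet_Ioi (fun y hy => min_le_right _ _)
    refine hle.trans ?_
    rw [integral_Ioi_rpow_of_lt (by linarith : (-1 - 2*α) < -1) hR]
    rw [show (-1 - 2*α + 1) = -(2*α) by ring, neg_div_neg_eq,
      show (-(2*α)) = -2*α by ring]
  -- step 4: arithmetic
  have harith : t ^ 2 * ((t⁻¹) ^ (2 - 2*α) / (2 - 2*α)) + (t⁻¹) ^ (-2*α) / (2*α)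
      = (1/(2 - 2*α) + 1/(2*α)) * t ^ (2*α) := by
    have hinv : ∀ s : ℝ, (t⁻¹) ^ s = t ^ (-s) := by
      intro s
      rw [← Real.rpow_neg_one t, ← Real.rpow_mul ht.le]
      ring_nf
    rw [hinv, hinv]
    rw [show t ^ (2:ℕ) = t ^ ((2:ℝ)) by rw [← Real.rpow_natCast t 2]; norm_num]
    rw [show (-(2 - 2*α)) = -2 + 2*α by ring, show (-(-2*α)) = 2*α by ring]
    have key : t ^ ((2:ℝ)) * t ^ (-2 + 2*α) = t ^ (2*α) := by
      rw [← Real.rpow_add ht]; norm_num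
    rw [show t ^ ((2:ℝ)) * (t ^ (-2 + 2*α) / (2 - 2*α)) = (t ^ ((2:ℝ)) * t ^ (-2 + 2*α)) / (2-2*α) by ring,
      key]
    ring
  calc ∫ y in Set.Ioi (0:ℝ), y * ((1 + y ^ 2) ^ (-(1 + α)) * min (t ^ 2 * y ^ 2) 1)
      ≤ ∫ y in Set.Ioi (0:ℝ), h y := step1
    _ = (∫ y in Set.Ioc (0:ℝ) t⁻¹, h y) + ∫ y in Set.Ioi t⁻¹, h y := step2
    _ ≤ t ^ 2 * ((t⁻¹) ^ (2 - 2*α) / (2 - 2*α)) + (t⁻¹) ^ (-2*α) / (2*α) := add_le_add piece1 piece2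
    _ = (1/(2 - 2*α) + 1/(2*α)) * t ^ (2*α) := harith

end OneD

lemma g_integrable {α : ℝ} (hα : 0 < α) :
    Integrable (fun ξ : E2 => (1 + ‖ξ‖ ^ 2) ^ (-(1 + α))) := by
  have h := integrable_rpow_neg_one_add_norm_sq (E := E2) (μ := volume) (r := 2*(1+α))
    (by simp; linarith)
  have : ∀ ξ : E2, (1 + ‖ξ‖ ^ 2) ^ (-(2*(1+α))/2) = (1 + ‖ξ‖ ^ 2) ^ (-(1 + α)) := by
    intro ξ; congr 1; ring
  simpa [this] using h

lemma meas_F (α : ℝ) (x : E2) (i j : Fin 2) :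
    Measurable (fun ξ : E2 => (1 + ‖ξ‖ ^ 2) ^ (-(1 + α)) *
      ((if i = j then (1:ℝ) else 0) - ξ i * ξ j / ‖ξ‖ ^ 2) *
      Real.cos (2 * π * (inner ℝ x ξ : ℝ))) := by
  have h1 : Measurable fun ξ : E2 => (1 + ‖ξ‖ ^ 2) ^ (-(1 + α)) := by fun_prop
  have h2 : Measurable fun ξ : E2 => ((if i = j then (1:ℝ) else 0) - ξ i * ξ j / ‖ξ‖ ^ 2) := by
    fun_prop
  have h3 : Measurable fun ξ : E2 => Real.cos (2 * π * (inner ℝ x ξ : ℝ)) := by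
    apply Real.measurable_cos.comp
    apply Measurable.const_mul
    exact (continuous_const.inner continuous_id).measurable
  exact (h1.mul h2).mul h3

lemma abs_apply_le_norm (ξ : E2) (i : Fin 2) : |ξ i| ≤ ‖ξ‖ := by
  rw [EuclideanSpace.norm_eq]
  rw [← Real.sqrt_sq (abs_nonneg (ξ i))]
  apply Real.sqrt_le_sqrt
  rw [sq_abs]
  calc ξ i ^ 2 = ‖ξ i‖ ^ 2 := by rw [Real.norm_eq_abs, sq_abs]
  _ ≤ ∑ j, ‖ξ j‖ ^ 2 := Finset.single_le_sum (f := fun j => ‖ξ j‖ ^ 2)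
      (fun j _ => by positivity) (Finset.mem_univ i)

lemma ent_bound (ξ : E2) (i j : Fin 2) :
    |(if i = j then (1:ℝ) else 0) - ξ i * ξ j / ‖ξ‖ ^ 2| ≤ 2 := by
  have h1 : |ξ i * ξ j / ‖ξ‖ ^ 2| ≤ 1 := by
    rcases eq_or_ne (‖ξ‖) 0 with h | h
    · simp [h]
    · rw [abs_div, abs_mul, abs_of_nonneg (by positivity : (0:ℝ) ≤ ‖ξ‖^2)]
      rw [div_le_one (by positivity)]
      calc |ξ i| * |ξ j| ≤ ‖ξ‖ * ‖ξ‖ :=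
        mul_le_mul (abs_apply_le_norm ξ i) (abs_apply_le_norm ξ j) (abs_nonneg _) (norm_nonneg _)
      _ = ‖ξ‖ ^ 2 := (sq ‖ξ‖).symm
  have h2 : |(if i = j then (1:ℝ) else 0)| ≤ 1 := by split <;> simp
  calc |(if i = j then (1:ℝ) else 0) - ξ i * ξ j / ‖ξ‖ ^ 2|
      ≤ |(if i = j then (1:ℝ) else 0)| + |ξ i * ξ j / ‖ξ‖ ^ 2| := abs_sub _ _
  _ ≤ 2 := by linarith

lemma cos_diff_bound (θ : ℝ) : |1 - Real.cos θ| ≤ min (θ ^ 2 / 2) 2 := by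
  rw [abs_of_nonneg (by linarith [Real.cos_le_one θ])]
  refine le_min (by linarith [Real.one_sub_sq_div_two_le_cos (x := θ)]) ?_
  linarith [Real.neg_one_le_cos θ]

lemma min_scale {a : ℝ} (ha : 0 ≤ a) : min (2 * π ^ 2 * a) 2 ≤ 2 * π ^ 2 * min a 1 := by
  have hπ : (1:ℝ) ≤ π ^ 2 := by nlinarith [Real.pi_gt_three]
  rcases le_total a 1 with h | h
  · rw [min_eq_left h]
    exact (min_le_left _ _)
  · rw [min_eq_right h]
    calc min (2 * π ^ 2 * a) 2 ≤ 2 := min_le_right _ _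
    _ ≤ 2 * π ^ 2 * 1 := by nlinarith

lemma int_F {α : ℝ} (hα : 0 < α) (x : E2) (i j : Fin 2) :
    Integrable (fun ξ : E2 => (1 + ‖ξ‖ ^ 2) ^ (-(1 + α)) *
      ((if i = j then (1:ℝ) else 0) - ξ i * ξ j / ‖ξ‖ ^ 2) *
      Real.cos (2 * π * (inner ℝ x ξ : ℝ))) := by
  refine ((g_integrable hα).const_mul 2).mono' (meas_F α x i j).aestronglyMeasurable ?_
  refine Filter.Eventually.of_forall fun ξ => ?_
  have hg : (0:ℝ) ≤ (1 + ‖ξ‖ ^ 2) ^ (-(1 + α)) := by positivity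
  rw [Real.norm_eq_abs, abs_mul, abs_mul, abs_of_nonneg hg]
  calc (1 + ‖ξ‖ ^ 2) ^ (-(1 + α)) * |(if i = j then (1:ℝ) else 0) - ξ i * ξ j / ‖ξ‖ ^ 2| *
        |Real.cos (2 * π * (inner ℝ x ξ : ℝ))|
      ≤ (1 + ‖ξ‖ ^ 2) ^ (-(1 + α)) * 2 * 1 := by
        apply mul_le_mul (mul_le_mul_of_nonneg_left (ent_bound ξ i j) hg)
          (Real.abs_cos_le_one _) (abs_nonneg _) (by positivity)
  _ = 2 * (1 + ‖ξ‖ ^ 2) ^ (-(1 + α)) := by ring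

lemma maj_integrable {α : ℝ} (hα : 0 < α) (t : ℝ) :
    Integrable (fun ξ : E2 => 4*π^2*((1 + ‖ξ‖ ^ 2) ^ (-(1 + α)) * min (t^2*‖ξ‖^2) 1)) := by
  refine ((g_integrable hα).const_mul (4*π^2)).mono' ?_ ?_
  · have : Measurable (fun ξ : E2 => 4*π^2*((1 + ‖ξ‖ ^ 2) ^ (-(1 + α)) * min (t^2*‖ξ‖^2) 1)) := by
      fun_prop
    exact this.aestronglyMeasurable
  · refine Filter.Eventually.of_forall fun ξ => ?_
    have hg : (0:ℝ) ≤ (1 + ‖ξ‖ ^ 2) ^ (-(1 + α)) := by positivity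
    have hm0 : (0:ℝ) ≤ min (t^2*‖ξ‖^2) 1 := le_min (by positivity) zero_le_one
    rw [Real.norm_eq_abs, abs_of_nonneg (by positivity)]
    have : min (t^2*‖ξ‖^2) 1 ≤ 1 := min_le_right _ _
    calc 4*π^2*((1 + ‖ξ‖ ^ 2) ^ (-(1 + α)) * min (t^2*‖ξ‖^2) 1)
        ≤ 4*π^2*((1 + ‖ξ‖ ^ 2) ^ (-(1 + α)) * 1) :=
          mul_le_mul_of_nonneg_left (mul_le_mul_of_nonneg_left this hg) (by positivity)
    _ = 4*π^2*(1 + ‖ξ‖ ^ 2) ^ (-(1 + α)) := by ring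

lemma pointwise_diff_bound {α : ℝ} (x : E2) (i j : Fin 2) (ξ : E2) :
    |(1 + ‖ξ‖ ^ 2) ^ (-(1 + α)) * ((if i = j then (1:ℝ) else 0) - ξ i * ξ j / ‖ξ‖ ^ 2) *
        Real.cos (2 * π * (inner ℝ (0:E2) ξ : ℝ)) -
      (1 + ‖ξ‖ ^ 2) ^ (-(1 + α)) * ((if i = j then (1:ℝ) else 0) - ξ i * ξ j / ‖ξ‖ ^ 2) *
        Real.cos (2 * π * (inner ℝ x ξ : ℝ))|
      ≤ 4*π^2*((1 + ‖ξ‖ ^ 2) ^ (-(1 + α)) * min (‖x‖^2*‖ξ‖^2) 1) := by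
  have hg : (0:ℝ) ≤ (1 + ‖ξ‖ ^ 2) ^ (-(1 + α)) := by positivity
  set g := (1 + ‖ξ‖ ^ 2) ^ (-(1 + α)) with hgdef
  set m := ((if i = j then (1:ℝ) else 0) - ξ i * ξ j / ‖ξ‖ ^ 2) with hmdef
  have h0 : (inner ℝ (0:E2) ξ : ℝ) = 0 := inner_zero_left ξ
  rw [h0]
  set θ := 2 * π * (inner ℝ x ξ : ℝ) with hθ
  have key : g * m * Real.cos (2 * π * 0) - g * m * Real.cos θ = g * m * (1 - Real.cos θ) := by
    rw [mul_zero, Real.cos_zero]; ring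
  rw [key, abs_mul, abs_mul, abs_of_nonneg hg]
  have hθsq : θ ^ 2 / 2 ≤ 2 * π ^ 2 * (‖x‖^2*‖ξ‖^2) := by
    have h1 : |(inner ℝ x ξ : ℝ)| ≤ ‖x‖ * ‖ξ‖ := abs_real_inner_le_norm x ξ
    have h2 : (inner ℝ x ξ : ℝ) ^ 2 ≤ (‖x‖ * ‖ξ‖) ^ 2 := by
      rw [← sq_abs]
      exact pow_le_pow_left₀ (abs_nonneg _) h1 2
    rw [hθ]
    nlinarith [sq_nonneg π]
  have hcos : |1 - Real.cos θ| ≤ 2 * π ^ 2 * min (‖x‖^2*‖ξ‖^2) 1 := by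
    refine (cos_diff_bound θ).trans ?_
    refine le_trans ?_ (min_scale (by positivity))
    exact min_le_min hθsq le_rfl
  calc g * |m| * |1 - Real.cos θ| ≤ g * 2 * (2 * π ^ 2 * min (‖x‖^2*‖ξ‖^2) 1) := by
        apply mul_le_mul (mul_le_mul_of_nonneg_left (ent_bound ξ i j) hg) hcos (abs_nonneg _)
          (by positivity)
  _ = 4*π^2*(g * min (‖x‖^2*‖ξ‖^2) 1) := by ring

lemma maj_radial {α : ℝ} (hα : α ∈ Set.Ioo (0:ℝ) 1) {t : ℝ} (ht : 0 < t) (ht1 : t ≤ 1) :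
    ∫ ξ : E2, 4*π^2*((1 + ‖ξ‖ ^ 2) ^ (-(1 + α)) * min (t^2*‖ξ‖^2) 1)
      ≤ 2 * (volume (Metric.ball (0:E2) 1)).toReal *
        ((4*π^2) * ((1/(2 - 2*α) + 1/(2*α)) * t ^ (2*α))) := by
  have heq : ∫ ξ : E2, 4*π^2*((1 + ‖ξ‖ ^ 2) ^ (-(1 + α)) * min (t^2*‖ξ‖^2) 1)
      = 2 • (volume (Metric.ball (0:E2) 1)).toReal •
        ∫ y in Set.Ioi (0:ℝ), y ^ 1 • (4*π^2*((1 + y ^ 2) ^ (-(1 + α)) * min (t^2*y^2) 1)) := by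
    rw [MeasureTheory.integral_fun_norm_addHaar volume
      (fun y : ℝ => 4*π^2*((1 + y ^ 2) ^ (-(1 + α)) * min (t^2*y^2) 1))]
    simp only [finrank_euclideanSpace, Fintype.card_fin, measureReal_def, Nat.reduceSub]
  rw [heq]
  simp only [nsmul_eq_mul, smul_eq_mul, pow_one, Nat.cast_ofNat]
  rw [← mul_assoc]
  apply mul_le_mul_of_nonneg_left _ (by positivity)
  have hrw : ∀ y : ℝ, y * (4*π^2*((1 + y ^ 2) ^ (-(1 + α)) * min (t^2*y^2) 1))
      = (4*π^2) * (y * ((1 + y ^ 2) ^ (-(1 + α)) * min (t^2*y^2) 1)) := fun y => by ring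
  simp only [hrw]
  rw [MeasureTheory.integral_const_mul]
  exact mul_le_mul_of_nonneg_left (oneD_bound hα ht ht1) (by positivity)

lemma maj_crude {α : ℝ} (hα : 0 < α) (t : ℝ) :
    ∫ ξ : E2, 4*π^2*((1 + ‖ξ‖ ^ 2) ^ (-(1 + α)) * min (t^2*‖ξ‖^2) 1)
      ≤ (4*π^2) * ∫ ξ : E2, (1 + ‖ξ‖ ^ 2) ^ (-(1 + α)) := by
  rw [← MeasureTheory.integral_const_mul]
  refine integral_mono (maj_integrable hα t) ((g_integrable hα).const_mul _) fun ξ => ?_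
  have hg : (0:ℝ) ≤ (1 + ‖ξ‖ ^ 2) ^ (-(1 + α)) := by positivity
  have h1 : min (t^2*‖ξ‖^2) 1 ≤ 1 := min_le_right _ _
  have h0 : (0:ℝ) ≤ min (t^2*‖ξ‖^2) 1 := le_min (by positivity) zero_le_one
  calc 4*π^2*((1 + ‖ξ‖ ^ 2) ^ (-(1 + α)) * min (t^2*‖ξ‖^2) 1)
      ≤ 4*π^2*((1 + ‖ξ‖ ^ 2) ^ (-(1 + α)) * 1) :=
        mul_le_mul_of_nonneg_left (mul_le_mul_of_nonneg_left h1 hg) (by positivity)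
  _ = 4*π^2*(1 + ‖ξ‖ ^ 2) ^ (-(1 + α)) := by ring

noncomputable section

/-- The Kraichnan covariance matrix `Q(x)`, stated entrywise.  Since the defining integrand
is even in `ξ`, the oscillatory factor `e^{2πi x·ξ}` may equivalently be replaced by
`cos(2π x·ξ)`. -/
def kraichnanQ (α : ℝ) (x : EuclideanSpace ℝ (Fin 2)) (i j : Fin 2) : ℝ :=
  ∫ ξ : EuclideanSpace ℝ (Fin 2),
    (1 + ‖ξ‖ ^ 2) ^ (-(1 + α)) * ((if i = j then (1:ℝ) else 0) - ξ i * ξ j / ‖ξ‖ ^ 2)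
      * Real.cos (2 * π * (inner ℝ x ξ : ℝ))

/-- `|Q(0) - Q(x)| ≤ C (|x|^{2α} ∧ 1)` for all `x ∈ ℝ²` (entrywise matrix bound). -/
theorem kraichnan_Q_holder (α : ℝ) (hα : α ∈ Set.Ioo (0:ℝ) 1) :
    ∃ C > 0, ∀ x : EuclideanSpace ℝ (Fin 2), ∀ i j : Fin 2,
      |kraichnanQ α 0 i j - kraichnanQ α x i j| ≤ C * min (‖x‖ ^ (2 * α)) 1 := by
  obtain ⟨hα0, hα1⟩ := hα
  set I := ∫ ξ : E2, (1 + ‖ξ‖ ^ 2) ^ (-(1 + α)) with hI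
  have hI0 : 0 ≤ I := integral_nonneg (fun ξ => by positivity)
  set V := (volume (Metric.ball (0:E2) 1)).toReal with hV
  have hV0 : 0 ≤ V := ENNReal.toReal_nonneg
  have hc1 : (0:ℝ) < 2 - 2*α := by linarith
  have hc2 : (0:ℝ) < 2*α := by linarith
  have hc : 0 < 1/(2 - 2*α) + 1/(2*α) := by
    have := one_div_pos.mpr hc1
    have := one_div_pos.mpr hc2
    linarith
  set C0 := (4*π^2) * I with hC0def
  set C1 := 2 * V * ((4*π^2) * (1/(2 - 2*α) + 1/(2*α))) with hC1def
  have hC0 : 0 ≤ C0 := mul_nonneg (by positivity) hI0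
  have hC1 : 0 ≤ C1 := mul_nonneg (mul_nonneg (by norm_num) hV0)
    (mul_nonneg (by positivity) hc.le)
  refine ⟨C0 + C1 + 1, by linarith, fun x i j => ?_⟩
  have key : |kraichnanQ α 0 i j - kraichnanQ α x i j|
      ≤ ∫ ξ : E2, 4*π^2*((1 + ‖ξ‖ ^ 2) ^ (-(1 + α)) * min (‖x‖^2*‖ξ‖^2) 1) := by
    have h0 := int_F hα0 (0:E2) i j
    have hx := int_F hα0 x i j
    unfold kraichnanQ
    rw [← MeasureTheory.integral_sub h0 hx]
    rw [← Real.norm_eq_abs]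
    refine (norm_integral_le_integral_norm _).trans ?_
    refine integral_mono_of_nonneg (Filter.Eventually.of_forall fun ξ => norm_nonneg _)
      (maj_integrable hα0 ‖x‖)
      (Filter.Eventually.of_forall fun ξ => ?_)
    simp only [Real.norm_eq_abs]
    exact pointwise_diff_bound x i j ξ
  rcases le_or_gt 1 ‖x‖ with hx1 | hx1
  · have hmin : min (‖x‖ ^ (2 * α)) 1 = 1 :=
      min_eq_right (Real.one_le_rpow hx1 (by positivity))
    rw [hmin, mul_one]
    refine key.trans ((maj_crude hα0 ‖x‖).trans ?_)
    rw [← hI, ← hC0def]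
    linarith
  · rcases eq_or_ne x 0 with rfl | hx0
    · rw [sub_self, abs_zero]
      exact mul_nonneg (by linarith) (le_min (Real.rpow_nonneg (norm_nonneg _) _) zero_le_one)
    · have ht : 0 < ‖x‖ := norm_pos_iff.mpr hx0
      have hmin : min (‖x‖ ^ (2 * α)) 1 = ‖x‖ ^ (2 * α) :=
        min_eq_left (Real.rpow_le_one ht.le hx1.le (by positivity))
      rw [hmin]
      refine (key.trans (maj_radial ⟨hα0, hα1⟩ ht hx1.le)).trans ?_
      have : 2 * V * ((4*π^2) * ((1/(2 - 2*α) + 1/(2*α)) * ‖x‖ ^ (2*α)))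
          = C1 * ‖x‖ ^ (2*α) := by rw [hC1def]; ring
      rw [this]
      exact mul_le_mul_of_nonneg_right (by linarith) (Real.rpow_nonneg ht.le _)

end
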